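/- Let f : X → X be a homeomorphism of a locally compact metric space, let p₁, …, p_k be attracting fixed points of f, let q₁, …, q_l be repelling fixed points of f, and let g : X → X be a homeomorphism that commutes with f and fixes each p_i and each q_j. Then there exists m > 0 such that, for the homeomorphism h = fᵐ ∘ g, each p_i is an attracting fixed point for h and each q_j is a repelling fixed point for h. -/

import Mathlib

open Filter

/-- `x₀` is an attracting fixed point for `f`: it is fixed and has a compact
neighborhood `W` whose forward iterates converge to `{x₀}` in the Hausdorff
topology, i.e. eventually enter every neighborhood of `x₀`. -/
def IsAttractingFixedPt {X : Type*} [TopologicalSpace X] (f : X → X) (x₀ : X) : Prop :=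
  f x₀ = x₀ ∧ ∃ W : Set X, IsCompact W ∧ W ∈ nhds x₀ ∧
    ∀ N ∈ nhds x₀, ∀ᶠ n : ℕ in atTop, f^[n] '' W ⊆ N

/-- The basin of attraction of `x₀` with respect to `f`:
the set of points whose forward orbit converges to `x₀`. -/
def basin {X : Type*} [TopologicalSpace X] (f : X → X) (x₀ : X) : Set X :=
  {x | Tendsto (fun n => f^[n] x) atTop (nhds x₀)}

/-- Iterate of a homeomorphism as a homeomorphism. -/
def homeoIter {X : Type*} [TopologicalSpace X] (f : X ≃ₜ X) : ℕ → X ≃ₜ X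
  | 0 => Homeomorph.refl X
  | n + 1 => (homeoIter f n).trans f

lemma homeoIter_coe {X : Type*} [TopologicalSpace X] (f : X ≃ₜ X) :
    ∀ n, ⇑(homeoIter f n) = (⇑f)^[n]
  | 0 => rfl
  | n + 1 => by
      funext x
      simp only [homeoIter, Homeomorph.trans_apply, homeoIter_coe f n]
      exact (Function.iterate_succ_apply' (⇑f) n x).symm

lemma homeoIter_symm_coe {X : Type*} [TopologicalSpace X] (f : X ≃ₜ X) :
    ∀ n, ⇑(homeoIter f n).symm = (⇑f.symm)^[n]
  | 0 => rfl
  | n + 1 => by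
      funext x
      simp [homeoIter, Homeomorph.symm_trans_apply, homeoIter_symm_coe f n,
        Function.iterate_succ, Function.comp]

/-- Key lemma: if `p` is attracting for `f` and `g` commutes with `f` and fixes `p`,
then for all sufficiently large `m`, `p` is attracting for `f^[m] ∘ g`. -/
lemma key_attract {X : Type*} [TopologicalSpace X] (f g : X ≃ₜ X)
    (hcomm : ∀ x, f (g x) = g (f x)) (p : X)
    (hatt : IsAttractingFixedPt (⇑f) p) (hgp : g p = p) :
    ∃ a : ℕ, ∀ m, a < m → IsAttractingFixedPt ((⇑f)^[m] ∘ ⇑g) p := by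
  obtain ⟨hfp, W, hWc, hWn, hWa⟩ := hatt
  have hc : Function.Commute (⇑f) (⇑g) := hcomm
  -- iterates of `g '' W` also shrink to p
  have himg : ∀ (n : ℕ) (S : Set X), (⇑f)^[n] '' (⇑g '' S) = ⇑g '' ((⇑f)^[n] '' S) := by
    intro n S
    rw [Set.image_image, Set.image_image]
    exact Set.image_congr fun x _ => hc.iterate_left n x
  have hWa' : ∀ N ∈ nhds p, ∀ᶠ n : ℕ in atTop, (⇑f)^[n] '' (⇑g '' W) ⊆ N := by
    intro N hN
    have hpre : ⇑g ⁻¹' N ∈ nhds p := by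
      apply g.continuous.continuousAt.preimage_mem_nhds
      rw [hgp]; exact hN
    filter_upwards [hWa _ hpre] with n hn
    rw [himg n W]
    intro y hy
    obtain ⟨x, hx, rfl⟩ := hy
    exact hn hx
  -- choose a with f^[n] '' (g '' W) ⊆ W for n ≥ a
  obtain ⟨a, ha⟩ := (hWa' W hWn).exists_forall_of_atTop
  -- inductive control of iterates of g
  have hkey : ∀ k : ℕ, (⇑f)^[a * k] '' ((⇑g)^[k] '' W) ⊆ W := by
    intro k
    induction k with
    | zero => simp
    | succ k ih =>
        have e1 : (⇑g)^[k + 1] '' W = ⇑g '' ((⇑g)^[k] '' W) := by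
          rw [Function.iterate_succ', Set.image_comp]
        have e2 : a * (k + 1) = a + a * k := by ring
        rw [e1, e2, Function.iterate_add, Set.image_comp]
        -- f^[a*k] '' (g '' S) = g '' (f^[a*k] '' S)
        rw [himg (a * k) ((⇑g)^[k] '' W)]
        have h4 : ⇑g '' ((⇑f)^[a * k] '' ((⇑g)^[k] '' W)) ⊆ ⇑g '' W :=
          Set.image_mono ih
        calc (⇑f)^[a] '' (⇑g '' ((⇑f)^[a * k] '' ((⇑g)^[k] '' W)))
            ⊆ (⇑f)^[a] '' (⇑g '' W) := Set.image_mono h4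
          _ ⊆ W := ha a le_rfl
  -- conclude
  refine ⟨a, fun m hm => ?_⟩
  have hfix : ((⇑f)^[m] ∘ ⇑g) p = p := by
    simp only [Function.comp_apply, hgp]
    exact Function.iterate_fixed hfp m
  refine ⟨hfix, W, hWc, hWn, fun N hN => ?_⟩
  obtain ⟨n₀, hn₀⟩ := (hWa N hN).exists_forall_of_atTop
  rw [eventually_atTop]
  refine ⟨n₀, fun n hn => ?_⟩
  have hcm : Function.Commute ((⇑f)^[m]) (⇑g) := hc.iterate_left m
  have e5 : ((⇑f)^[m] ∘ ⇑g)^[n] = (⇑f)^[m * n] ∘ (⇑g)^[n] := by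
    rw [hcm.comp_iterate, Function.iterate_mul]
  have e6 : m * n = (m - a) * n + a * n := by
    rw [← Nat.add_mul, Nat.sub_add_cancel hm.le]
  rw [e5, e6, Set.image_comp, Function.iterate_add, Set.image_comp]
  have h7 : (⇑f)^[(m - a) * n] '' ((⇑f)^[a * n] '' ((⇑g)^[n] '' W))
      ⊆ (⇑f)^[(m - a) * n] '' W := Set.image_mono (hkey n)
  refine h7.trans (hn₀ _ ?_)
  calc n₀ ≤ n := hn
    _ = 1 * n := (one_mul n).symm
    _ ≤ (m - a) * n := Nat.mul_le_mul_right n (by omega)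

/-- If `f` is a homeomorphism of a locally compact metric space with attracting fixed
points `p₁,…,p_k` and repelling fixed points `q₁,…,q_l`, and `g` is a homeomorphism
commuting with `f` fixing each `p_i` and each `q_j`, then there is `m > 0` such that
for `h = fᵐ ∘ g` each `p_i` is attracting and each `q_j` is repelling for `h`. -/
theorem stmt_11 {X : Type*} [MetricSpace X] [LocallyCompactSpace X]
    (f : X ≃ₜ X) {k l : ℕ} (p : Fin k → X) (q : Fin l → X)
    (hp : ∀ i, IsAttractingFixedPt (⇑f) (p i))
    (hq : ∀ j, IsAttractingFixedPt (⇑f.symm) (q j))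
    (g : X ≃ₜ X) (hcomm : ∀ x, f (g x) = g (f x))
    (hgp : ∀ i, g (p i) = p i) (hgq : ∀ j, g (q j) = q j) :
    ∃ m : ℕ, 0 < m ∧ ∃ h : X ≃ₜ X, ⇑h = (⇑f)^[m] ∘ ⇑g ∧
      (∀ i, IsAttractingFixedPt (⇑h) (p i)) ∧
      (∀ j, IsAttractingFixedPt (⇑h.symm) (q j)) := by
  have hcomm' : ∀ x, f.symm (g.symm x) = g.symm (f.symm x) := by
    intro x
    have h1 : f (g (f.symm (g.symm x))) = x := by rw [hcomm]; simp
    have h2 : f (g (g.symm (f.symm x))) = x := by simp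
    exact g.injective (f.injective (h1.trans h2.symm))
  have hgq' : ∀ j, g.symm (q j) = q j := fun j => g.injective (by simp [hgq j])
  choose A hA using fun i => key_attract f g hcomm (p i) (hp i) (hgp i)
  choose B hB using fun j => key_attract f.symm g.symm hcomm' (q j) (hq j) (hgq' j)
  set m : ℕ := (Finset.univ.sup A ⊔ Finset.univ.sup B) + 1 with hm
  refine ⟨m, Nat.succ_pos _, g.trans (homeoIter f m), ?_, ?_, ?_⟩
  · funext x
    simp [Homeomorph.trans_apply, homeoIter_coe]
  · intro i
    have := hA i m (by
      have : A i ≤ Finset.univ.sup A := Finset.le_sup (Finset.mem_univ i)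
      omega)
    have hco : ⇑(g.trans (homeoIter f m)) = (⇑f)^[m] ∘ ⇑g := by
      funext x; simp [Homeomorph.trans_apply, homeoIter_coe]
    rwa [hco]
  · intro j
    have := hB j m (by
      have : B j ≤ Finset.univ.sup B := Finset.le_sup (Finset.mem_univ j)
      omega)
    have hco : ⇑(g.trans (homeoIter f m)).symm = (⇑f.symm)^[m] ∘ ⇑g.symm := by
      funext x
      have hc' : Function.Commute (⇑f.symm) (⇑g.symm) := hcomm'
      have : (⇑f.symm)^[m] (g.symm x) = g.symm ((⇑f.symm)^[m] x) :=
        hc'.iterate_left m x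
      simp [Homeomorph.symm_trans_apply, homeoIter_symm_coe, Function.comp, this]
    rwa [hco]
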